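/- arXiv:1404.3875 — 3 statements merged into one kernel-verified Lean document; each statement's English description precedes it below -/
import Mathlib

section
/- The generating function S(z) = (z^3 - z^2 - z + 1 - sqrt(z^6 + 2z^5 - 5z^4 + 4z^3 - z^2 - 2z + 1))/(2z^2(1 - z)) satisfies S(z) = z^2/(1-z) + z^2·S(z) + z^2·S(z)^2 for all real z with 0 < z < ρ, where ρ ≈ 0.509308 is the smallest positive root of z^6 + 2z^5 - 5z^4 + 4z^3 - z^2 - 2z + 1. -/
theorem lambda_gf_equation (ρ : ℝ)
    (hρ0 : 0 < ρ)
    (hρroot : ρ^6 + 2*ρ^5 - 5*ρ^4 + 4*ρ^3 - ρ^2 - 2*ρ + 1 = 0)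
    (hρmin : ∀ y : ℝ, 0 < y → y^6 + 2*y^5 - 5*y^4 + 4*y^3 - y^2 - 2*y + 1 = 0 → ρ ≤ y)
    (z : ℝ) (h0 : 0 < z) (h1 : z < ρ) :
    let S : ℝ := (z^3 - z^2 - z + 1 -
        Real.sqrt (z^6 + 2*z^5 - 5*z^4 + 4*z^3 - z^2 - 2*z + 1)) / (2*z^2*(1 - z))
    S = z^2/(1-z) + z^2 * S + z^2 * S^2 := by
  have hρ1 : ρ ≤ 1 := hρmin 1 one_pos (by norm_num)
  have hz1 : 0 < 1 - z := by linarith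
  have hP : 0 ≤ z^6 + 2*z^5 - 5*z^4 + 4*z^3 - z^2 - 2*z + 1 := by
    by_contra hneg
    push_neg at hneg
    set f : ℝ → ℝ := fun y => y^6 + 2*y^5 - 5*y^4 + 4*y^3 - y^2 - 2*y + 1 with hf
    have hcont : ContinuousOn f (Set.Icc 0 z) := by fun_prop
    have hmem : (0:ℝ) ∈ Set.Ioo (f z) (f 0) := by
      constructor
      · exact hneg
      · show (0:ℝ) < f 0; norm_num [hf]
    have := intermediate_value_Ioo' (le_of_lt h0) hcont hmem
    obtain ⟨c, hc, hfc⟩ := this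
    have := hρmin c hc.1 hfc
    linarith [hc.2]
  intro S
  have hs2 : (Real.sqrt (z^6 + 2*z^5 - 5*z^4 + 4*z^3 - z^2 - 2*z + 1))^2
      = z^6 + 2*z^5 - 5*z^4 + 4*z^3 - z^2 - 2*z + 1 := Real.sq_sqrt hP
  have hz : z ≠ 0 := ne_of_gt h0
  have hz1' : (1:ℝ) - z ≠ 0 := ne_of_gt hz1
  set s := Real.sqrt (z^6 + 2*z^5 - 5*z^4 + 4*z^3 - z^2 - 2*z + 1) with hsdef
  show (z^3 - z^2 - z + 1 - s) / (2*z^2*(1 - z)) = z^2/(1-z)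
      + z^2 * ((z^3 - z^2 - z + 1 - s) / (2*z^2*(1 - z)))
      + z^2 * ((z^3 - z^2 - z + 1 - s) / (2*z^2*(1 - z)))^2
  field_simp
  linear_combination (-1) * hs2
end

section
/- If ρ ∈ (0,1) satisfies ρ^5 + 3ρ^4 - 2ρ^3 + 2ρ^2 + ρ - 1 = 0, then 2ρ^4/((1-ρ)(1-ρ^2)) = (1-ρ^2)/2. -/
theorem variable_app_probs_equal (ρ : ℝ) (h0 : 0 < ρ) (h1 : ρ < 1)
    (hroot : ρ^5 + 3*ρ^4 - 2*ρ^3 + 2*ρ^2 + ρ - 1 = 0) :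
    2*ρ^4 / ((1 - ρ) * (1 - ρ^2)) = (1 - ρ^2) / 2 := by
  have hne : (1 - ρ) * (1 - ρ^2) ≠ 0 := by nlinarith [sq_nonneg ρ]
  rw [div_eq_div_iff hne (by norm_num)]
  nlinarith [hroot]
end

section
/- Let S(m, n) be defined by S(m,0) = S(m,1) = 0 and S(m, n+2) = (if m ≥ n+1 then 1 else 0) + S(m+1, n) + sum_{k=0}^{n} S(m,k)·S(m,n-k). Then for all m and n, S(m, n) ≤ S(m+1, n), and S(m, n) = S(n, n) for all m ≥ n; in particular the pointwise limit S(∞, n) = lim_{m→∞} S(m, n) exists and equals S(n, n), satisfying S(∞,0) = S(∞,1) = 0 and S(∞, n+2) = 1 + S(∞, n) + sum_{k=0}^n S(∞,k)·S(∞,n-k). -/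
theorem lambda_bounded_free_indices (S : ℕ → ℕ → ℕ)
    (h0 : ∀ m, S m 0 = 0) (h1 : ∀ m, S m 1 = 0)
    (hrec : ∀ m n, S m (n+2) =
        (if n + 1 ≤ m then 1 else 0) + S (m+1) n +
          ∑ k ∈ Finset.range (n+1), S m k * S m (n-k)) :
    (∀ m n, S m n ≤ S (m+1) n) ∧
    (∀ m n, n ≤ m → S m n = S n n) ∧
    (∀ n, Filter.Tendsto (fun m => S m n) Filter.atTop (nhds (S n n))) ∧
    (S 0 0 = 0 ∧ S 1 1 = 0 ∧
      ∀ n, S (n+2) (n+2) =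
        1 + S n n + ∑ k ∈ Finset.range (n+1), S k k * S (n-k) (n-k)) := by
  have stab : ∀ n m m', n ≤ m → n ≤ m' → S m n = S m' n := by
    intro n
    induction n using Nat.strong_induction_on with
    | _ n ih =>
      match n with
      | 0 => intro m m' _ _; rw [h0, h0]
      | 1 => intro m m' _ _; rw [h1, h1]
      | n + 2 =>
        intro m m' hm hm'
        rw [hrec, hrec]
        have e1 : S (m+1) n = S (m'+1) n := ih n (by omega) _ _ (by omega) (by omega)
        have e2 : ∀ k ∈ Finset.range (n+1), S m k * S m (n-k) = S m' k * S m' (n-k) := by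
          intro k hk
          simp only [Finset.mem_range] at hk
          rw [ih k (by omega) m m' (by omega) (by omega),
            ih (n-k) (by omega) m m' (by omega) (by omega)]
        rw [e1, Finset.sum_congr rfl e2, if_pos (by omega), if_pos (by omega)]
  have mono : ∀ n m, S m n ≤ S (m+1) n := by
    intro n
    induction n using Nat.strong_induction_on with
    | _ n ih =>
      match n with
      | 0 => intro m; rw [h0, h0]
      | 1 => intro m; rw [h1, h1]
      | n + 2 =>
        intro m
        rw [hrec, hrec]
        refine add_le_add (add_le_add ?_ (ih n (by omega) (m+1))) ?_
        · split_ifs <;> omega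
        · refine Finset.sum_le_sum fun k hk => ?_
          simp only [Finset.mem_range] at hk
          exact Nat.mul_le_mul (ih k (by omega) m) (ih (n-k) (by omega) m)
  refine ⟨fun m n => mono n m, fun m n h => stab n m n h le_rfl, ?_, h0 0, h1 1, ?_⟩
  · intro n
    refine Filter.Tendsto.congr' ?_ tendsto_const_nhds
    filter_upwards [Filter.eventually_ge_atTop n] with m hm
    exact stab n n m le_rfl hm
  · intro n
    rw [hrec, if_pos (by omega), stab n (n+2+1) n (by omega) le_rfl]
    congr 1
    refine Finset.sum_congr rfl fun k hk => ?_
    simp only [Finset.mem_range] at hk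
    rw [stab k (n+2) k (by omega) le_rfl, stab (n-k) (n+2) (n-k) (by omega) le_rfl]
end
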